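/- Let K be a field and S = K[x1,x2,x3,x4]. Let W0 be the 6-dimensional subspace of quadrics spanned by the squarefree monomials x_i x_j with 1 ≤ i < j ≤ 4. Then the space W0^2 spanned by all products of two elements of W0 has dimension 19 (it is spanned by the 19 monomials of degree 4 in which every variable appears with exponent at most 2). -/

import Mathlib

open MvPolynomial Finsupp

noncomputable section

def Mfin : Finset (Fin 4 → Fin 3) := Finset.univ.filter (fun w => ∑ i, (w i : ℕ) = 4)

lemma card_Mfin : Mfin.card = 19 := by decide

lemma exists_prod : ∀ w ∈ Mfin, ∃ i j k l : Fin 4, i < j ∧ k < l ∧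
    ∀ v, (w v : ℕ) = (if i = v then 1 else 0) + (if j = v then 1 else 0)
      + (if k = v then 1 else 0) + (if l = v then 1 else 0) := by decide

def Mset : Finset (Fin 4 →₀ ℕ) :=
  Mfin.image (fun w => Finsupp.equivFunOnFinite.symm (fun v => (w v : ℕ)))

lemma mem_Mset (m : Fin 4 →₀ ℕ) :
    m ∈ Mset ↔ (∀ i, m i ≤ 2) ∧ (m.sum fun _ e => e) = 4 := by
  constructor
  · intro hm
    obtain ⟨w, hw, rfl⟩ := Finset.mem_image.1 hm
    simp only [Mfin, Finset.mem_filter] at hw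
    constructor
    · intro i
      simp only [coe_equivFunOnFinite_symm]
      exact Nat.lt_succ_iff.1 (w i).isLt
    · rw [Finsupp.sum_fintype _ _ (fun _ => rfl)]
      simpa using hw.2
  · rintro ⟨h1, h2⟩
    refine Finset.mem_image.2 ⟨fun v => ⟨m v, Nat.lt_succ_of_le (h1 v)⟩, ?_, ?_⟩
    · simp only [Mfin, Finset.mem_filter, Finset.mem_univ, true_and]
      rw [Finsupp.sum_fintype _ _ (fun _ => rfl)] at h2
      simpa using h2
    · simpa using Finsupp.equivFunOnFinite_symm_coe m

lemma card_Mset : Mset.card = 19 := by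
  rw [Mset, Finset.card_image_of_injective _ ?_, card_Mfin]
  intro w1 w2 h
  have := Finsupp.equivFunOnFinite.symm.injective h
  funext v
  exact Fin.val_injective (congrFun this v)

theorem stmt_0 (K : Type*) [Field K]
    (W0 : Submodule K (MvPolynomial (Fin 4) K))
    (hW0 : W0 = Submodule.span K
      {p : MvPolynomial (Fin 4) K | ∃ i j : Fin 4, i < j ∧ p = X i * X j}) :
    Module.finrank K ↥(W0 * W0) = 19 ∧
    W0 * W0 = Submodule.span K
      {p : MvPolynomial (Fin 4) K | ∃ m : Fin 4 →₀ ℕ,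
        (∀ i, m i ≤ 2) ∧ (m.sum fun _ e => e) = 4 ∧ p = monomial m 1} := by
  have hT : {p : MvPolynomial (Fin 4) K | ∃ m : Fin 4 →₀ ℕ,
      (∀ i, m i ≤ 2) ∧ (m.sum fun _ e => e) = 4 ∧ p = monomial m 1}
      = (fun m : Fin 4 →₀ ℕ => (monomial m (1 : K))) '' ↑Mset := by
    ext p
    simp only [Set.mem_setOf_eq, Set.mem_image, Finset.mem_coe, mem_Mset]
    constructor
    · rintro ⟨m, h1, h2, rfl⟩; exact ⟨m, ⟨h1, h2⟩, rfl⟩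
    · rintro ⟨m, ⟨h1, h2⟩, rfl⟩; exact ⟨m, h1, h2, rfl⟩
  have key : ∀ i j k l : Fin 4, i < j → k < l →
      (X i * X j) * (X k * X l) =
        monomial (single i 1 + single j 1 + single k 1 + single l 1) (1 : K) := by
    intro i j k l _ _
    rw [X, X, X, X, monomial_mul, monomial_mul, monomial_mul]
    have h : (single i 1 + single j 1) + (single k 1 + single l 1)
        = single i 1 + single j 1 + single k 1 + single l 1 := by abel
    rw [h]
    norm_num
  have h2 : W0 * W0 = Submodule.span K
      {p : MvPolynomial (Fin 4) K | ∃ m : Fin 4 →₀ ℕ,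
        (∀ i, m i ≤ 2) ∧ (m.sum fun _ e => e) = 4 ∧ p = monomial m 1} := by
    rw [hW0, Submodule.span_mul_span]
    apply le_antisymm
    · rw [Submodule.span_le]
      rintro x hx
      rw [Set.mem_mul] at hx
      obtain ⟨a, ⟨i, j, hij, rfl⟩, b, ⟨k, l, hkl, rfl⟩, rfl⟩ := hx
      apply Submodule.subset_span
      refine ⟨single i 1 + single j 1 + single k 1 + single l 1, ?_, ?_, key i j k l hij hkl⟩
      · intro v
        simp only [Finsupp.add_apply, Finsupp.single_apply]
        have : i ≠ j := hij.ne
        have : k ≠ l := hkl.ne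
        split_ifs <;> simp_all
      · simp [Finsupp.sum_add_index', Finsupp.sum_single_index]
    · rw [Submodule.span_le]
      rintro p ⟨m, h1, h2, rfl⟩
      have hm : m ∈ Mset := (mem_Mset m).2 ⟨h1, h2⟩
      obtain ⟨w, hw, rfl⟩ := Finset.mem_image.1 hm
      obtain ⟨i, j, k, l, hij, hkl, hv⟩ := exists_prod w hw
      have hmeq : Finsupp.equivFunOnFinite.symm (fun v => ((w v : ℕ)))
          = single i 1 + single j 1 + single k 1 + single l 1 := by
        ext v
        simp only [coe_equivFunOnFinite_symm, Finsupp.add_apply, Finsupp.single_apply]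
        exact hv v
      rw [hmeq, ← key i j k l hij hkl]
      exact Submodule.subset_span
        (Set.mul_mem_mul ⟨i, j, hij, rfl⟩ ⟨k, l, hkl, rfl⟩)
  refine ⟨?_, h2⟩
  rw [h2, hT, Set.image_eq_range]
  have hli : LinearIndependent K fun x : (↑Mset : Set (Fin 4 →₀ ℕ)) =>
      (monomial (x : Fin 4 →₀ ℕ) (1 : K)) := by
    have hb := (basisMonomials (Fin 4) K).linearIndependent.comp
      ((↑) : (↑Mset : Set (Fin 4 →₀ ℕ)) → Fin 4 →₀ ℕ) Subtype.coe_injective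
    simp only [coe_basisMonomials, Function.comp_def] at hb
    exact hb
  rw [finrank_span_eq_card hli, ← Set.toFinset_card, Finset.toFinset_coe, card_Mset]
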